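/- Let Ω: ℝ^{n×m} → ℝ satisfy Ω(θX) = θ²Ω(X) for all θ ∈ ℝ and X ∈ ℝ^{n×m}, and suppose Ω(X) ≥ 0 for all X. Then Ω is convex if and only if the function N(X) = √(Ω(X)) is a semi-norm, i.e., N satisfies N(θX) = |θ|·N(X) and N(X+Y) ≤ N(X) + N(Y) for all X, Y and θ. Moreover, if Ω is convex then Ω(X) ≥ 0 holds automatically for all X (without assuming nonnegativity), and if Ω is strictly convex then N is a norm. -/

import Mathlib

/-- For a nonnegative, order-2 homogeneous `Ω`, convexity of `Ω` is equivalent to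
`√Ω` being a semi-norm; convexity of `Ω` implies nonnegativity automatically; and
strict convexity makes `√Ω` a norm. -/
theorem sqrt_of_quadratic_homogeneous_seminorm {n m : ℕ}
    (Ω : Matrix (Fin n) (Fin m) ℝ → ℝ)
    (hhom : ∀ (θ : ℝ) (X : Matrix (Fin n) (Fin m) ℝ), Ω (θ • X) = θ ^ 2 * Ω X) :
    ((∀ X, 0 ≤ Ω X) →
      (ConvexOn ℝ Set.univ Ω ↔
        ((∀ (θ : ℝ) (X : Matrix (Fin n) (Fin m) ℝ),
            Real.sqrt (Ω (θ • X)) = |θ| * Real.sqrt (Ω X)) ∧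
         (∀ X Y : Matrix (Fin n) (Fin m) ℝ,
            Real.sqrt (Ω (X + Y)) ≤ Real.sqrt (Ω X) + Real.sqrt (Ω Y))))) ∧
    (ConvexOn ℝ Set.univ Ω → ∀ X, 0 ≤ Ω X) ∧
    (StrictConvexOn ℝ Set.univ Ω →
      ((∀ (θ : ℝ) (X : Matrix (Fin n) (Fin m) ℝ),
          Real.sqrt (Ω (θ • X)) = |θ| * Real.sqrt (Ω X)) ∧
       (∀ X Y : Matrix (Fin n) (Fin m) ℝ,
          Real.sqrt (Ω (X + Y)) ≤ Real.sqrt (Ω X) + Real.sqrt (Ω Y)) ∧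
       (∀ X : Matrix (Fin n) (Fin m) ℝ, Real.sqrt (Ω X) = 0 → X = 0))) := by
  -- Ω vanishes at 0
  have h0 : Ω 0 = 0 := by
    have := hhom 0 0
    simpa using this
  -- Ω is even
  have hneg : ∀ X, Ω (-X) = Ω X := by
    intro X
    have := hhom (-1) X
    simpa using this
  -- convexity implies nonnegativity
  have hnonneg : ConvexOn ℝ Set.univ Ω → ∀ X, 0 ≤ Ω X := by
    intro hc X
    have h := hc.2 (Set.mem_univ X) (Set.mem_univ (-X))
      (by norm_num : (0:ℝ) ≤ 1/2) (by norm_num : (0:ℝ) ≤ 1/2) (by norm_num)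
    have hx : (1/2 : ℝ) • X + (1/2 : ℝ) • (-X) = 0 := by module
    rw [hx, h0] at h
    rw [hneg X] at h
    simp only [smul_eq_mul] at h
    linarith
  -- sqrt homogeneity (unconditional)
  have hsqhom : ∀ (θ : ℝ) (X : Matrix (Fin n) (Fin m) ℝ),
      Real.sqrt (Ω (θ • X)) = |θ| * Real.sqrt (Ω X) := by
    intro θ X
    rw [hhom, Real.sqrt_mul (sq_nonneg θ), Real.sqrt_sq_eq_abs]
  -- triangle inequality from convexity
  have htri : ConvexOn ℝ Set.univ Ω → ∀ X Y : Matrix (Fin n) (Fin m) ℝ,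
      Real.sqrt (Ω (X + Y)) ≤ Real.sqrt (Ω X) + Real.sqrt (Ω Y) := by
    intro hc X Y
    have hΩ := hnonneg hc
    refine le_of_forall_pos_le_add ?_
    intro ε hε
    obtain ⟨a, ha⟩ : ∃ a : ℝ, a = Real.sqrt (Ω X) + ε/2 := ⟨_, rfl⟩
    obtain ⟨b, hb⟩ : ∃ b : ℝ, b = Real.sqrt (Ω Y) + ε/2 := ⟨_, rfl⟩
    have ha0 : 0 < a := by have := Real.sqrt_nonneg (Ω X); rw [ha]; linarith
    have hb0 : 0 < b := by have := Real.sqrt_nonneg (Ω Y); rw [hb]; linarith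
    have hab : 0 < a + b := by linarith
    obtain ⟨t, htdef⟩ : ∃ t : ℝ, t = a / (a + b) := ⟨_, rfl⟩
    have ht0 : 0 < t := htdef ▸ div_pos ha0 hab
    have ht1 : t < 1 := by
      rw [htdef, div_lt_one hab]; linarith
    have h1t : 1 - t = b / (a + b) := by
      field_simp [htdef]
      rw [htdef, sub_mul, div_mul_cancel₀ _ hab.ne']; ring
    have h1t0 : (0:ℝ) ≤ 1 - t := by linarith
    have hsum : t + (1 - t) = 1 := by ring
    have key := hc.2 (Set.mem_univ (t⁻¹ • X)) (Set.mem_univ ((1 - t)⁻¹ • Y))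
      ht0.le h1t0 hsum
    have hx : t • (t⁻¹ • X) = X := by
      rw [smul_smul, mul_inv_cancel₀ ht0.ne']; simp
    have hy : (1 - t) • ((1 - t)⁻¹ • Y) = Y := by
      rw [smul_smul, mul_inv_cancel₀ (by linarith : (1:ℝ) - t ≠ 0)]; simp
    rw [hx, hy, hhom, hhom] at key
    simp only [smul_eq_mul] at key
    -- key : Ω (X + Y) ≤ t * (t⁻¹ ^ 2 * Ω X) + (1 - t) * ((1 - t)⁻¹ ^ 2 * Ω Y)
    have hΩX : Ω X ≤ a ^ 2 := by
      have h1 : Real.sqrt (Ω X) ≤ a := by rw [ha]; linarith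
      nlinarith [Real.sq_sqrt (hΩ X), Real.sqrt_nonneg (Ω X)]
    have hΩY : Ω Y ≤ b ^ 2 := by
      have h1 : Real.sqrt (Ω Y) ≤ b := by rw [hb]; linarith
      nlinarith [Real.sq_sqrt (hΩ Y), Real.sqrt_nonneg (Ω Y)]
    have hbound : Ω (X + Y) ≤ (a + b) ^ 2 := by
      have e1 : t * (t⁻¹ ^ 2 * Ω X) = Ω X / t := by
        field_simp
      have hne : (1:ℝ) - t ≠ 0 := by linarith
      have e2 : (1 - t) * ((1 - t)⁻¹ ^ 2 * Ω Y) = Ω Y / (1 - t) := by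
        field_simp
      rw [e1, e2] at key
      have c1 : Ω X / t ≤ a * (a + b) := by
        rw [div_le_iff₀ ht0, htdef]
        have : a * (a + b) * (a / (a + b)) = a ^ 2 := by field_simp
        rw [this]; exact hΩX
      have c2 : Ω Y / (1 - t) ≤ b * (a + b) := by
        rw [div_le_iff₀ (by linarith : (0:ℝ) < 1 - t), h1t]
        have : b * (a + b) * (b / (a + b)) = b ^ 2 := by field_simp
        rw [this]; exact hΩY
      have heq : a * (a + b) + b * (a + b) = (a + b) ^ 2 := by ring
      linarith
    calc Real.sqrt (Ω (X + Y)) ≤ Real.sqrt ((a + b) ^ 2) := Real.sqrt_le_sqrt hbound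
      _ = a + b := Real.sqrt_sq hab.le
      _ = Real.sqrt (Ω X) + Real.sqrt (Ω Y) + ε := by rw [ha, hb]; ring
  -- seminorm implies convexity (given nonnegativity)
  have hconv : (∀ X, 0 ≤ Ω X) →
      (∀ (θ : ℝ) (X : Matrix (Fin n) (Fin m) ℝ),
        Real.sqrt (Ω (θ • X)) = |θ| * Real.sqrt (Ω X)) →
      (∀ X Y : Matrix (Fin n) (Fin m) ℝ,
        Real.sqrt (Ω (X + Y)) ≤ Real.sqrt (Ω X) + Real.sqrt (Ω Y)) →
      ConvexOn ℝ Set.univ Ω := by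
    intro hΩ hN1 hN2
    refine ⟨convex_univ, ?_⟩
    intro X _ Y _ s t hs ht hst
    simp only [smul_eq_mul]
    have hsq : ∀ Z, Ω Z = Real.sqrt (Ω Z) ^ 2 := fun Z => (Real.sq_sqrt (hΩ Z)).symm
    have h1 : Real.sqrt (Ω (s • X + t • Y)) ≤ s * Real.sqrt (Ω X) + t * Real.sqrt (Ω Y) := by
      calc Real.sqrt (Ω (s • X + t • Y))
          ≤ Real.sqrt (Ω (s • X)) + Real.sqrt (Ω (t • Y)) := hN2 _ _
        _ = s * Real.sqrt (Ω X) + t * Real.sqrt (Ω Y) := by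
            rw [hN1 s X, hN1 t Y, abs_of_nonneg hs, abs_of_nonneg ht]
    have h2 : 0 ≤ Real.sqrt (Ω (s • X + t • Y)) := Real.sqrt_nonneg _
    have h3 := Real.sqrt_nonneg (Ω X)
    have h4 := Real.sqrt_nonneg (Ω Y)
    rw [hsq (s • X + t • Y), hsq X, hsq Y]
    nlinarith [sq_nonneg (Real.sqrt (Ω X) - Real.sqrt (Ω Y)), mul_nonneg hs ht]
  refine ⟨?_, hnonneg, ?_⟩
  · intro hΩ
    constructor
    · intro hc
      exact ⟨hsqhom, htri hc⟩
    · intro ⟨hN1, hN2⟩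
      exact hconv hΩ hN1 hN2
  · intro hsc
    have hc := hsc.convexOn
    have hΩ := hnonneg hc
    refine ⟨hsqhom, htri hc, ?_⟩
    intro X hX
    by_contra hX0
    have hΩX : Ω X = 0 :=
      le_antisymm (Real.sqrt_eq_zero'.mp hX) (hΩ X)
    have hne : X ≠ -X := by
      intro h
      apply hX0
      have : (2 : ℝ) • X = 0 := by
        rw [two_smul]; nth_rewrite 2 [h]; simp
      simpa using congrArg (fun Z => (2:ℝ)⁻¹ • Z) this
    have key := hsc.2 (Set.mem_univ X) (Set.mem_univ (-X)) hne
      (by norm_num : (0:ℝ) < 1/2) (by norm_num : (0:ℝ) < 1/2) (by norm_num)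
    have hx : (1/2 : ℝ) • X + (1/2 : ℝ) • (-X) = 0 := by module
    rw [hx, h0, hneg X, hΩX] at key
    simp at key
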